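/- Let 0 < τ_l < τ_p < τ_n, let β ∈ (τ_p/(τ_p+τ_n), 1], let k > 0, and set λ = (1/τ_l + 1/τ_p)/2. Then for every ω ∈ ℝ, Re G(−λ + iω, k, β) > 0, i.e. the shifted transfer function G(s − λ, k, β) is positive real on the imaginary axis. -/

import Mathlib

open Complex

/-- Open-loop transfer function of the mixed feedback amplifier. -/
noncomputable def G (τl τp τn k β : ℝ) (s : ℂ) : ℂ :=
  -(k : ℂ) * (((β * (τn + τp) - τp : ℝ) : ℂ) * s + ((2 * β - 1 : ℝ) : ℂ)) /
    (((τl : ℂ) * s + 1) * ((τp : ℂ) * s + 1) * ((τn : ℂ) * s + 1))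

theorem stmt3 (τl τp τn β k : ℝ)
    (hτl : 0 < τl) (hτp : τl < τp) (hτn : τp < τn)
    (hβ : β ∈ Set.Ioc (τp / (τp + τn)) 1) (hk : 0 < k) :
    ∀ ω : ℝ,
      0 < (G τl τp τn k β (-(((1/τl + 1/τp)/2 : ℝ) : ℂ) + Complex.I * (ω : ℂ))).re := by
  intro ω
  have hτp0 : (0:ℝ) < τp := hτl.trans hτp
  have hτn0 : (0:ℝ) < τn := hτp0.trans hτn
  set l : ℝ := (1/τl + 1/τp)/2 with hl_def
  set m : ℝ := (1/τl - 1/τp)/2 with hm_def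
  have hm : 0 < m := by
    have : 1/τp < 1/τl := one_div_lt_one_div_of_lt hτl hτp
    simp only [hm_def]; linarith
  have hl0 : 0 < l := by
    have h1 : 0 < 1/τl := by positivity
    have h2 : 0 < 1/τp := by positivity
    simp only [hl_def]; linarith
  have hτpl : τp * l - 1 = τp * m := by
    rw [hl_def, hm_def]; field_simp; ring
  have hτll : τl * l - 1 = -(τl * m) := by
    rw [hl_def, hm_def]; field_simp; ring
  have hl2 : 2 * τl * τp * l = τl + τp := by
    rw [hl_def]; field_simp; ring
  set a : ℝ := β * (τn + τp) - τp with ha_def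
  set b : ℝ := 2 * β - 1 with hb_def
  have hβ0 : 0 < β := lt_trans (div_pos hτp0 (by linarith)) hβ.1
  have ha : 0 < a := by
    have h1 := hβ.1
    rw [div_lt_iff₀ (by linarith : (0:ℝ) < τp + τn)] at h1
    simp only [ha_def]; nlinarith
  have hab : 0 < a - τp * b := by
    simp only [ha_def, hb_def]; nlinarith [hβ.2]
  have halb : 0 < a * l - b := by
    have h : τp * (a * l - b) = (a - τp * b) + a * (τp * m) := by
      nlinarith [hτpl]
    nlinarith [mul_pos ha (mul_pos hτp0 hm)]
  have hτnl : 0 < τn * l - 1 := by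
    have h2 : 0 < (τn - τp) * l := mul_pos (by linarith) hl0
    have h3 : 0 < τp * m := mul_pos hτp0 hm
    nlinarith [hτpl]
  clear_value l m a b
  set s : ℂ := -((l:ℝ):ℂ) + Complex.I * (ω:ℂ) with hs_def
  set R : ℝ := τl * τp * (m^2 + ω^2) with hR_def
  have hR : 0 < R := by positivity
  set w : ℂ := (τn:ℂ) * s + 1 with hw_def
  have hwre : w.re = 1 - τn * l := by simp [hw_def, hs_def]; ring
  have hwim : w.im = τn * ω := by simp [hw_def, hs_def]
  have hw0 : w ≠ 0 := by
    intro h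
    rw [Complex.ext_iff] at h
    rw [hwre] at h
    simp at h
    linarith [h.1]
  have hprod : ((τl:ℂ) * s + 1) * ((τp:ℂ) * s + 1) = -((R:ℝ):ℂ) := by
    apply Complex.ext
    · simp [hs_def, hR_def, Complex.mul_re, Complex.mul_im, ← Complex.ofReal_pow]
      linear_combination (τp*l - 1) * hτll + (-(τl*m)) * hτpl
    · simp [hs_def, Complex.mul_re, Complex.mul_im]
      linear_combination (-ω) * hl2
  set z : ℂ := ((a:ℝ):ℂ) * s + ((b:ℝ):ℂ) with hz_def
  have hzre : z.re = b - a * l := by simp [hz_def, hs_def]; ring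
  have hzim : z.im = a * ω := by simp [hz_def, hs_def]
  have hR0 : ((R:ℝ):ℂ) ≠ 0 := by exact_mod_cast hR.ne'
  have hG : G τl τp τn k β s = ((k / R : ℝ):ℂ) * (z / w) := by
    rw [G]
    have haa : ((β * (τn + τp) - τp : ℝ):ℂ) * s + ((2 * β - 1 : ℝ):ℂ) = z := by
      rw [hz_def, ha_def, hb_def]
    rw [haa, hprod]
    rw [hw_def] at hw0 ⊢
    push_cast
    field_simp
    try ring
  rw [hG, Complex.re_ofReal_mul, Complex.div_re, hzre, hzim, hwre, hwim]
  have hnsq : 0 < Complex.normSq w := Complex.normSq_pos.mpr hw0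
  have hnum : 0 < (b - a * l) * (1 - τn * l) + a * ω * (τn * ω) := by
    have he : (b - a*l)*(1 - τn*l) + a*ω*(τn*ω) = (a*l - b)*(τn*l - 1) + a*ω^2*τn := by
      ring
    have h1 := mul_pos halb hτnl
    have h2 : 0 ≤ a*ω^2*τn := by positivity
    linarith [he.ge, he.le]
  have hsum : (b - a*l)*(1 - τn*l) / Complex.normSq w + a*ω*(τn*ω) / Complex.normSq w
      = ((b - a*l)*(1 - τn*l) + a*ω*(τn*ω)) / Complex.normSq w := by ring
  rw [hsum]
  exact mul_pos (div_pos hk hR) (div_pos hnum hnsq)
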